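/- Assume $(b_n)$ is log-concave and strictly increasing. Then $v_{k,l} \leq v_{k+1,l}$ for all $k,l \geq 0$, hence $V_k \leq V_{k+1}$. -/

import Mathlib

/-- The coefficients `v_{k,l}`, defined via their initial values `v_{k,0} = 1`,
`v_{0,l} = ∏_{j=1}^l b_{2j-2}/b_{2j-1}` and recurrence
`v_{k+1,l} = (b_k/b_{k+2l}) v_{k,l} + (b_{k+2l-1}/b_{k+2l}) v_{k+1,l-1}`. -/
noncomputable def vsec (b : ℕ → ℝ) : ℕ → ℕ → ℝ
  | 0, l => ∏ j ∈ Finset.range l, b (2 * j) / b (2 * j + 1)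
  | _ + 1, 0 => 1
  | k + 1, l + 1 =>
      b k / b (k + 2 * (l + 1)) * vsec b k (l + 1) +
        b (k + 2 * l + 1) / b (k + 2 * (l + 1)) * vsec b (k + 1) l
  termination_by k l => (k, l)

lemma stmt12_vsec_pos (b : ℕ → ℝ) (hb : ∀ n, 0 < b n) : ∀ k l, 0 < vsec b k l := by
  intro k
  induction k with
  | zero =>
    intro l
    rw [vsec]
    exact Finset.prod_pos fun j _ => div_pos (hb _) (hb _)
  | succ k ih =>
    intro l
    induction l with
    | zero => rw [vsec]; norm_num
    | succ l ihl =>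
      rw [vsec]
      exact add_pos (mul_pos (div_pos (hb k) (hb (k + 2*(l+1)))) (ih (l+1)))
        (mul_pos (div_pos (hb (k + 2*l + 1)) (hb (k + 2*(l+1)))) ihl)

lemma stmt12_bcross (b : ℕ → ℝ) (hb : ∀ n, 0 < b n)
    (hlc : ∀ n : ℕ, b n * b (n + 2) ≤ b (n + 1) ^ 2) :
    ∀ n d, b n * b (n + d + 1) ≤ b (n + 1) * b (n + d) := by
  intro n d
  induction d with
  | zero => ring_nf; rfl
  | succ d ih =>
    have hl := hlc (n + d)
    have h2 := hb (n + d + 1)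
    have e1 : n + (d+1) + 1 = n + d + 2 := by ring
    have e2 : n + (d+1) = n + d + 1 := by ring
    rw [e1, e2]
    nlinarith [mul_le_mul_of_nonneg_right ih (hb (n+d+2)).le,
      mul_le_mul_of_nonneg_left hl (hb (n+1)).le, hb n, hb (n+1), hb (n+d), hb (n+d+2)]

lemma stmt12_vsec_k_zero (b : ℕ → ℝ) : ∀ k, vsec b k 0 = 1 := by
  intro k
  match k with
  | 0 => rw [vsec]; simp
  | (m+1) => rw [vsec]

lemma stmt12_vsec_zero_succ (b : ℕ → ℝ) (l : ℕ) :
    vsec b 0 (l+1) = vsec b 0 l * (b (2*l) / b (2*l+1)) := by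
  rw [vsec, vsec, Finset.prod_range_succ]

lemma stmt12_vsec_ratio (b : ℕ → ℝ) (hb : ∀ n, 0 < b n) :
    ∀ k l, b (k + 2*l) * vsec b k l ≤ b (k + 2*l + 1) * vsec b k (l+1) := by
  intro k l
  match k with
  | 0 =>
    rw [vsec, vsec, Finset.prod_range_succ]
    rw [show (0:ℕ) + 2*l = 2*l from by ring]
    rw [mul_comm (∏ j ∈ Finset.range l, b (2*j) / b (2*j+1)) _, ← mul_assoc]
    have he : b (2*l+1) * (b (2*l) / b (2*l+1)) = b (2*l) := by
      rw [mul_comm, div_mul_cancel₀ _ (hb (2*l+1)).ne']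
    rw [he]
  | (m+1) =>
    rw [vsec]
    have hv := stmt12_vsec_pos b hb (m+1) l
    have hvm := stmt12_vsec_pos b hb m (l+1)
    have h1 : 0 ≤ b m / b (m + 2*(l+1)) * vsec b m (l+1) :=
      le_of_lt (mul_pos (div_pos (hb _) (hb _)) hvm)
    have key : b (m+1+2*l) * vsec b (m+1) l ≤
        b (m+1+2*l+1) * (b (m + 2*l + 1) / b (m + 2*(l+1)) * vsec b (m+1) l) := by
      rw [show m+1+2*l+1 = m + 2*(l+1) from by ring]
      rw [← mul_assoc, mul_div_cancel₀ _ (hb (m + 2*(l+1))).ne']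
      rw [show m+1+2*l = m + 2*l + 1 from by ring]
    calc b (m+1+2*l) * vsec b (m+1) l
        ≤ b (m+1+2*l+1) * (b (m + 2*l + 1) / b (m + 2*(l+1)) * vsec b (m+1) l) := key
      _ ≤ b (m+1+2*l+1) * (b m / b (m + 2*(l+1)) * vsec b m (l+1) +
            b (m + 2*l + 1) / b (m + 2*(l+1)) * vsec b (m+1) l) := by
          apply mul_le_mul_of_nonneg_left _ (hb _).le
          linarith

lemma stmt12_vsec_mono_k (b : ℕ → ℝ) (hb : ∀ n, 0 < b n) (hmono : StrictMono b)
    (hlc : ∀ n : ℕ, b n * b (n + 2) ≤ b (n + 1) ^ 2) :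
    ∀ k l, vsec b k l ≤ vsec b (k + 1) l := by
  intro k
  induction k with
  | zero =>
    intro l
    induction l with
    | zero =>
      rw [vsec, vsec]
      simp
    | succ l ihl =>
      have e : vsec b 0 (l+1) = vsec b 0 l * (b (2*l) / b (2*l+1)) := stmt12_vsec_zero_succ b l
      have e2 : vsec b (0+1) (l+1) = b 0 / b (0+2*(l+1)) * vsec b 0 (l+1) +
          b (0+2*l+1) / b (0+2*(l+1)) * vsec b (0+1) l := by conv_lhs => rw [vsec]
      simp only [Nat.zero_add] at e2 ⊢
      rw [e, e2]
      have h0l := stmt12_vsec_pos b hb 0 l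
      have h1l := stmt12_vsec_pos b hb 1 l
      have hfrac : b (2*l) / b (2*l+1) ≤ b (2*l+1) / b (2*(l+1)) := by
        rw [div_le_div_iff₀ (hb _) (hb _), show 2*(l+1) = 2*l+2 from by ring]
        nlinarith [hlc (2*l)]
      have step1 : vsec b 0 l * (b (2*l) / b (2*l+1)) ≤
          vsec b 1 l * (b (2*l+1) / b (2*(l+1))) :=
        mul_le_mul ihl hfrac (le_of_lt (div_pos (hb _) (hb _))) h1l.le
      have hpos1 : 0 ≤ b 0 / b (2*(l+1)) * vsec b 0 (l+1) :=
        le_of_lt (mul_pos (div_pos (hb _) (hb _)) (stmt12_vsec_pos b hb 0 (l+1)))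
      calc vsec b 0 l * (b (2*l) / b (2*l+1))
          ≤ vsec b 1 l * (b (2*l+1) / b (2*(l+1))) := step1
        _ = b (2*l+1) / b (2*(l+1)) * vsec b 1 l := by ring
        _ ≤ b 0 / b (2*(l+1)) * vsec b 0 (l+1) + b (2*l+1) / b (2*(l+1)) * vsec b 1 l := by
            linarith
  | succ k ih =>
    intro l
    induction l with
    | zero => rw [vsec, vsec]
    | succ l ihl =>
      have hA := ih (l+1)
      have hYZ := ihl
      set X := vsec b (k+1) (l+1) with hX
      set Y := vsec b (k+1) l with hY
      set Z := vsec b (k+2) l with hZ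
      have hXpos := stmt12_vsec_pos b hb (k+1) (l+1)
      have hYpos := stmt12_vsec_pos b hb (k+1) l
      have h1 : X = (b k * vsec b k (l+1) + b (k+2*l+1) * Y) / b (k+2*l+2) := by
        rw [hX, vsec, show k+2*(l+1) = k+2*l+2 from by ring]
        ring
      have h1' : b (k+2*l+2) * X = b k * vsec b k (l+1) + b (k+2*l+1) * Y := by
        rw [h1, mul_comm, div_mul_cancel₀ _ (hb (k+2*l+2)).ne']
      have hstar : (b (k+2*l+2) - b k) * X ≤ b (k+2*l+1) * Y := by
        have := mul_le_mul_of_nonneg_left hA (hb k).le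
        linarith
      have hcross : b k * b (k+2*l+2) ≤ b (k+1) * b (k+2*l+1) := by
        have := stmt12_bcross b hb hlc k (2*l+1)
        rw [show k + (2*l+1) + 1 = k+2*l+2 from by ring,
          show k + (2*l+1) = k+2*l+1 from by ring] at this
        exact this
      have hlc1 : b (k+2*l+1) * b (k+2*l+3) ≤ b (k+2*l+2)^2 := by
        have := hlc (k+2*l+1)
        rw [show k+2*l+1+2 = k+2*l+3 from by ring, show k+2*l+1+1 = k+2*l+2 from by ring] at this
        exact this
      have hkey : (b (k+2*l+3) - b (k+1)) * b (k+2*l+1) ≤ (b (k+2*l+2) - b k) * b (k+2*l+2) := by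
        nlinarith
      have hc : (0:ℝ) < b (k+2*l+2) - b k := sub_pos.2 (hmono (by omega))
      have hd : (0:ℝ) < b (k+2*l+3) - b (k+1) := sub_pos.2 (hmono (by omega))
      have hfin : (b (k+2*l+3) - b (k+1)) * X ≤ b (k+2*l+2) * Y := by
        nlinarith [mul_le_mul_of_nonneg_left hstar hd.le,
          mul_le_mul_of_nonneg_right hkey hYpos.le, hc]
      have e2 : vsec b (k+1+1) (l+1) = b (k+1) / b (k+1+2*(l+1)) * X +
          b (k+1+2*l+1) / b (k+1+2*(l+1)) * Z := by rw [vsec]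
      rw [e2, show k+1+2*(l+1) = k+2*l+3 from by ring, show k+1+2*l+1 = k+2*l+2 from by ring]
      rw [div_mul_eq_mul_div, div_mul_eq_mul_div, ← add_div, le_div_iff₀ (hb _)]
      have hz := mul_le_mul_of_nonneg_left hYZ (hb (k+2*l+2)).le
      linarith

lemma stmt12_vsec_zero_lb (b : ℕ → ℝ) (hb : ∀ n, 0 < b n)
    (hlc : ∀ n : ℕ, b n * b (n + 2) ≤ b (n + 1) ^ 2) :
    ∀ l, b 0 ^ 2 * b (2*l+1) ≤ b 1 * b (2*l) ^ 2 * (vsec b 0 l) ^ 2 := by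
  intro l
  induction l with
  | zero =>
    rw [stmt12_vsec_k_zero]
    norm_num
    exact le_of_eq (by ring)
  | succ l ih =>
    have e := stmt12_vsec_zero_succ b l
    have hsq : b (2*l+1)^2 * (vsec b 0 (l+1))^2 = b (2*l)^2 * (vsec b 0 l)^2 := by
      rw [e]
      field_simp [(hb (2*l+1)).ne']
    have hlc1 : b (2*l+1) * b (2*l+3) ≤ b (2*l+2)^2 := by
      have := hlc (2*l+1)
      rw [show 2*l+1+2 = 2*l+3 from by ring, show 2*l+1+1 = 2*l+2 from by ring] at this
      exact this
    have hv := stmt12_vsec_pos b hb 0 (l+1)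
    have hvl := stmt12_vsec_pos b hb 0 l
    rw [show 2*(l+1)+1 = 2*l+3 from by ring, show 2*(l+1) = 2*l+2 from by ring]
    have hmul : b (2*l+1)^2 * (b 0 ^2 * b (2*l+3)) ≤
        b (2*l+1)^2 * (b 1 * b (2*l+2)^2 * (vsec b 0 (l+1))^2) := by
      have r1 : b (2*l+1)^2 * (b 1 * b (2*l+2)^2 * (vsec b 0 (l+1))^2)
          = b 1 * b (2*l+2)^2 * (b (2*l+1)^2 * (vsec b 0 (l+1))^2) := by ring
      rw [r1, hsq]
      nlinarith [mul_le_mul_of_nonneg_right ih (mul_pos (hb (2*l+1)) (hb (2*l+3))).le,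
        mul_le_mul_of_nonneg_left hlc1 (mul_pos (mul_pos (hb 0) (hb 0)) (hb (2*l+1))).le,
        hb 0, hb 1, hb (2*l), hb (2*l+1), hb (2*l+2), hb (2*l+3), sq_nonneg (vsec b 0 l)]
    exact le_of_mul_le_mul_left hmul (pow_pos (hb _) 2)

lemma stmt12_vsec_ub_aux (b : ℕ → ℝ) (hb : ∀ n, 0 < b n)
    (hlc : ∀ n : ℕ, b n * b (n + 2) ≤ b (n + 1) ^ 2) (k : ℕ) :
    ∀ l, b (k+2*l+1) * vsec b (k+1) l ≤
      b k * (∑ j ∈ Finset.range (l+1), b (k+2*j+1) / (b (k+2*j))^2) * (b (k+2*l) * vsec b k l) := by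
  intro l
  induction l with
  | zero =>
    rw [stmt12_vsec_k_zero, stmt12_vsec_k_zero, show (0:ℕ)+1 = 1 from rfl, Finset.sum_range_one,
      show k+2*0+1 = k+1 from by ring, show k+2*0 = k from by ring, mul_one, mul_one]
    refine le_of_eq ?_
    rw [eq_comm, mul_comm (b k) (b (k+1) / b k ^ 2), mul_assoc, ← pow_two,
      div_mul_cancel₀ _ (pow_ne_zero 2 (hb k).ne')]
  | succ l ih =>
    set s := ∑ j ∈ Finset.range (l+1), b (k+2*j+1) / (b (k+2*j))^2 with hs
    have spos : 0 < s := by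
      rw [hs]
      apply Finset.sum_pos (fun j _ => div_pos (hb _) (pow_pos (hb _) 2))
      exact Finset.nonempty_range_add_one
    have hsum : ∑ j ∈ Finset.range (l+1+1), b (k+2*j+1) / (b (k+2*j))^2
        = s + b (k+2*l+3) / (b (k+2*l+2))^2 := by
      rw [Finset.sum_range_succ, ← hs, show k+2*(l+1)+1 = k+2*l+3 from by ring,
        show k+2*(l+1) = k+2*l+2 from by ring]
    set A := vsec b k (l+1) with hA
    set Y := vsec b (k+1) l with hY
    set W := vsec b k l with hW
    have hApos := stmt12_vsec_pos b hb k (l+1)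
    have hYpos := stmt12_vsec_pos b hb (k+1) l
    have hWpos := stmt12_vsec_pos b hb k l
    have hrec : b (k+2*l+2) * vsec b (k+1) (l+1) = b k * A + b (k+2*l+1) * Y := by
      have h1 : vsec b (k+1) (l+1) = (b k * A + b (k+2*l+1) * Y) / b (k+2*l+2) := by
        rw [hA, hY, vsec, show k+2*(l+1) = k+2*l+2 from by ring]
        ring
      rw [h1, mul_comm, div_mul_cancel₀ _ (hb (k+2*l+2)).ne']
    have hrat : b (k+2*l) * W ≤ b (k+2*l+1) * A := stmt12_vsec_ratio b hb k l
    have hlc1 : b (k+2*l+1) * b (k+2*l+3) ≤ b (k+2*l+2)^2 := by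
      have := hlc (k+2*l+1)
      rw [show k+2*l+1+2 = k+2*l+3 from by ring, show k+2*l+1+1 = k+2*l+2 from by ring] at this
      exact this
    rw [hsum, show k+2*(l+1)+1 = k+2*l+3 from by ring, show k+2*(l+1) = k+2*l+2 from by ring]
    have expand : b (k+2*l+2) * (b k * (s + b (k+2*l+3)/(b (k+2*l+2))^2) * (b (k+2*l+2) * A))
        = b k * s * b (k+2*l+2)^2 * A + b k * b (k+2*l+3) * A := by
      rw [show b (k+2*l+2) * (b k * (s + b (k+2*l+3)/(b (k+2*l+2))^2) * (b (k+2*l+2) * A))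
          = b k * s * b (k+2*l+2)^2 * A
            + b k * (b (k+2*l+3)/(b (k+2*l+2))^2 * (b (k+2*l+2))^2) * A from by ring,
        div_mul_cancel₀ _ (pow_ne_zero 2 (hb (k+2*l+2)).ne')]
    have key : b (k+2*l+2) * (b (k+2*l+3) * vsec b (k+1) (l+1))
        ≤ b k * s * b (k+2*l+2)^2 * A + b k * b (k+2*l+3) * A := by
      have e1 : b (k+2*l+2) * (b (k+2*l+3) * vsec b (k+1) (l+1))
          = b (k+2*l+3) * (b (k+2*l+2) * vsec b (k+1) (l+1)) := by ring
      rw [e1, hrec]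
      have step1 : b (k+2*l+1) * Y ≤ b k * s * (b (k+2*l+1) * A) := by
        calc b (k+2*l+1) * Y ≤ b k * s * (b (k+2*l) * W) := ih
          _ ≤ b k * s * (b (k+2*l+1) * A) := by
              apply mul_le_mul_of_nonneg_left hrat (mul_pos (hb k) spos).le
      nlinarith [mul_le_mul_of_nonneg_left step1 (hb (k+2*l+3)).le,
        mul_le_mul_of_nonneg_right hlc1 (mul_pos (mul_pos (hb k) spos) hApos).le,
        hb (k+2*l+3), hb k, spos, hApos]
    have hm : b (k+2*l+2) * (b (k+2*l+3) * vsec b (k+1) (l+1))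
        ≤ b (k+2*l+2) * (b k * (s + b (k+2*l+3)/(b (k+2*l+2))^2) * (b (k+2*l+2) * A)) := by
      rw [expand]; exact key
    exact le_of_mul_le_mul_left hm (hb (k+2*l+2))

lemma stmt12_vsec_row_le (b : ℕ → ℝ) (hb : ∀ n, 0 < b n) (hmono : StrictMono b)
    (hlc : ∀ n : ℕ, b n * b (n + 2) ≤ b (n + 1) ^ 2) :
    ∀ k l, vsec b 0 l ≤ vsec b k l := by
  intro k
  induction k with
  | zero => intro l; exact le_refl _
  | succ k ih => intro l; exact le_trans (ih l) (stmt12_vsec_mono_k b hb hmono hlc k l)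

/-- if `(b_n)` is log-concave and strictly increasing, then
`v_{k,l} ≤ v_{k+1,l}` for all `k, l ≥ 0`, hence `V_k ≤ V_{k+1}`. -/
theorem stmt12 (b : ℕ → ℝ) (hb : ∀ n, 0 < b n) (hmono : StrictMono b)
    (hlc : ∀ n : ℕ, b n * b (n + 2) ≤ b (n + 1) ^ 2) :
    (∀ k l : ℕ, vsec b k l ≤ vsec b (k + 1) l) ∧
    (∀ k : ℕ, Real.sqrt (∑' l : ℕ, (vsec b k l) ^ 2) ≤
      Real.sqrt (∑' l : ℕ, (vsec b (k + 1) l) ^ 2)) := by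
  have hpos := stmt12_vsec_pos b hb
  have hmk := stmt12_vsec_mono_k b hb hmono hlc
  refine ⟨hmk, fun k => ?_⟩
  have hle : ∀ l, (vsec b k l)^2 ≤ (vsec b (k+1) l)^2 :=
    fun l => pow_le_pow_left₀ (hpos k l).le (hmk k l) 2
  by_cases hS : Summable (fun l => (vsec b (k+1) l)^2)
  · have hk : Summable (fun l => (vsec b k l)^2) :=
      Summable.of_nonneg_of_le (fun l => sq_nonneg _) hle hS
    exact Real.sqrt_le_sqrt (Summable.tsum_le_tsum hle hk hS)
  · rw [tsum_eq_zero_of_not_summable hS]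
    have hnk : ¬ Summable (fun l => (vsec b k l)^2) := by
      intro hk
      by_cases hP : Summable (fun j => (b (2*j))⁻¹)
      · -- transfer summability upward, contradicting hS
        apply hS
        set T := ∑' j, (b (2*j))⁻¹ with hT
        have hTnn : 0 ≤ T := tsum_nonneg (fun j => (inv_pos.2 (hb _)).le)
        set C := b k * (b 1 / b 0) * T with hC
        have hCnn : 0 ≤ C :=
          mul_nonneg (mul_nonneg (hb k).le (div_pos (hb 1) (hb 0)).le) hTnn
        have hbound : ∀ l, vsec b (k+1) l ≤ C * vsec b k l := by
          intro l
          have haux := stmt12_vsec_ub_aux b hb hlc k l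
          set s := ∑ j ∈ Finset.range (l+1), b (k+2*j+1) / (b (k+2*j))^2 with hs
          have hsle : s ≤ (b 1 / b 0) * T := by
            have hterm : ∀ j ∈ Finset.range (l+1),
                b (k+2*j+1) / (b (k+2*j))^2 ≤ (b 1 / b 0) * (b (2*j))⁻¹ := by
              intro j _
              have h1 := stmt12_bcross b hb hlc 0 (k+2*j)
              rw [Nat.zero_add, Nat.zero_add] at h1
              have h2 : b (2*j) ≤ b (k+2*j) := hmono.monotone (by omega)
              have e : (b 1 / b 0) * (b (2*j))⁻¹ = b 1 / (b 0 * b (2*j)) := by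
                field_simp
              rw [e, div_le_div_iff₀ (pow_pos (hb _) 2) (mul_pos (hb 0) (hb (2*j)))]
              nlinarith [mul_le_mul_of_nonneg_right h1 (hb (2*j)).le,
                mul_le_mul_of_nonneg_left h2 (mul_pos (hb 1) (hb (k+2*j))).le]
            calc s ≤ ∑ j ∈ Finset.range (l+1), (b 1 / b 0) * (b (2*j))⁻¹ :=
                  Finset.sum_le_sum hterm
              _ = (b 1 / b 0) * ∑ j ∈ Finset.range (l+1), (b (2*j))⁻¹ := by
                  rw [Finset.mul_sum]
              _ ≤ (b 1 / b 0) * T := by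
                  apply mul_le_mul_of_nonneg_left _ (div_pos (hb 1) (hb 0)).le
                  exact Summable.sum_le_tsum _ (fun j _ => (inv_pos.2 (hb _)).le) hP
          have h3 : b k * s * (b (k+2*l) * vsec b k l)
              ≤ b k * ((b 1 / b 0) * T) * (b (k+2*l+1) * vsec b k l) := by
            apply mul_le_mul
            · exact mul_le_mul_of_nonneg_left hsle (hb k).le
            · exact mul_le_mul_of_nonneg_right
                (hmono.monotone (Nat.le_succ (k+2*l))) (hpos k l).le
            · exact (mul_pos (hb (k+2*l)) (hpos k l)).le
            · exact mul_nonneg (hb k).le (mul_nonneg (div_pos (hb 1) (hb 0)).le hTnn)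
          have h4 : b (k+2*l+1) * vsec b (k+1) l ≤ b (k+2*l+1) * (C * vsec b k l) := by
            calc b (k+2*l+1) * vsec b (k+1) l
                ≤ b k * ((b 1 / b 0) * T) * (b (k+2*l+1) * vsec b k l) := le_trans haux h3
              _ = b (k+2*l+1) * (C * vsec b k l) := by rw [hC]; ring
          exact le_of_mul_le_mul_left h4 (hb (k+2*l+1))
        have hsq : ∀ l, (vsec b (k+1) l)^2 ≤ C^2 * (vsec b k l)^2 := by
          intro l
          calc (vsec b (k+1) l)^2 ≤ (C * vsec b k l)^2 :=
                pow_le_pow_left₀ (hpos (k+1) l).le (hbound l) 2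
            _ = C^2 * (vsec b k l)^2 := by ring
        exact Summable.of_nonneg_of_le (fun l => sq_nonneg _) hsq (hk.mul_left (C^2))
      · -- then vsec b k l ^ 2 dominates (b (2l))⁻¹, contradiction
        apply hP
        have hlb : ∀ l, (b (2*l))⁻¹ ≤ (b 1 / b 0^2) * (vsec b k l)^2 := by
          intro l
          have h0 := stmt12_vsec_zero_lb b hb hlc l
          have hrow : (vsec b 0 l)^2 ≤ (vsec b k l)^2 :=
            pow_le_pow_left₀ (hpos 0 l).le (stmt12_vsec_row_le b hb hmono hlc k l) 2
          have hmain : b 0 ^2 * b (2*l) ≤ b 1 * b (2*l)^2 * (vsec b k l)^2 := by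
            have h5 : b (2*l) ≤ b (2*l+1) := (hmono (by omega)).le
            nlinarith [mul_le_mul_of_nonneg_left hrow (mul_pos (hb 1) (pow_pos (hb (2*l)) 2)).le,
              hb 0, hb (2*l), sq_nonneg (vsec b 0 l)]
          have e : (b 1 / b 0^2) * (vsec b k l)^2 = (b 1 * (vsec b k l)^2) / b 0^2 := by ring
          rw [e, inv_eq_one_div, div_le_div_iff₀ (hb (2*l)) (pow_pos (hb 0) 2)]
          nlinarith [hmain, hb (2*l)]
        exact Summable.of_nonneg_of_le (fun l => (inv_pos.2 (hb _)).le) hlb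
          (hk.mul_left (b 1 / b 0^2))
    rw [tsum_eq_zero_of_not_summable hnk, Real.sqrt_zero]
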